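/- arXiv:1904.10687 — 3 statements merged into one kernel-verified Lean document; each statement's English description precedes it below -/
import Mathlib

section
/- Let α, β ∈ [0,1] and let (Q_i)_{i∈I} be an (α,β) covering of ℝ². Then there exists a constant C' ≥ 1, depending only on the constants in the definition of the covering, such that for every i ∈ I and all ξ, η ∈ Q_i one has (1/C')·(1 + |η|) ≤ 1 + |ξ| ≤ C'·(1 + |η|). -/
noncomputable section

open Real Set MeasureTheory Pointwise
open scoped ENNReal

/-- `ℝ²` with the Euclidean norm. -/
abbrev R2 : Type := EuclideanSpace ℝ (Fin 2)

/-- The vector `(a, b) ∈ ℝ²`. -/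
def vec2 (a b : ℝ) : R2 := (EuclideanSpace.equiv (Fin 2) ℝ).symm ![a, b]

/-- Action of a `2×2` matrix on `ℝ²`. -/
def mulV (M : Matrix (Fin 2) (Fin 2) ℝ) (x : R2) : R2 :=
  (EuclideanSpace.equiv (Fin 2) ℝ).symm (M.mulVec ((EuclideanSpace.equiv (Fin 2) ℝ) x))

/-- A family `(Q i)_{i ∈ ι}` of subsets of `ℝ²` is an `(α,β)` covering of `ℝ²` if its
members are open and bounded and:
(1) it is an admissible covering of `ℝ²` (it covers `ℝ²` and the number of its members
that intersect any one of its members is uniformly bounded);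
(2) `λ(Q i) ≍ (1+|ξ|)^{α+β}` for all `i` and `ξ ∈ Q i`, with `λ` Lebesgue measure;
(3) for each `i` there is an interval `L_i ⊆ [0,∞)` with `λ(L_i) ≤ C₁·(1+|ξ|)^α` and
`|ξ| ∈ L_i` for all `ξ ∈ Q i`;
(4) for each `i` there is an angle `φ_i ∈ ℝ` such that every `ξ ∈ Q i` can be written
as `ξ = |ξ|·(cos φ, sin φ)` with `min_{ω ∈ {0,π}} |φ − (φ_i + ω)| ≤ C₂·(1+|ξ|)^{β−1}`;
with all constants independent of `i` and `ξ`. -/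
structure IsABCovering (α β : ℝ) {ι : Type*} (Q : ι → Set R2) : Prop where
  isOpen : ∀ i, IsOpen (Q i)
  isBounded : ∀ i, Bornology.IsBounded (Q i)
  covers : (⋃ i, Q i) = (Set.univ : Set R2)
  admissible : ∃ K : ℕ, ∀ i, {l : ι | (Q l ∩ Q i).Nonempty}.encard ≤ K
  measure_bounds : ∃ c C : ℝ, 0 < c ∧ c ≤ C ∧ ∀ i, ∀ ξ ∈ Q i,
    ENNReal.ofReal (c * (1 + ‖ξ‖) ^ (α + β)) ≤ MeasureTheory.volume (Q i) ∧
    MeasureTheory.volume (Q i) ≤ ENNReal.ofReal (C * (1 + ‖ξ‖) ^ (α + β))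
  radial : ∃ C₁ : ℝ, 0 < C₁ ∧ ∀ i, ∃ L : Set ℝ, L ⊆ Set.Ici (0:ℝ) ∧ L.OrdConnected ∧
    ∀ ξ ∈ Q i, MeasureTheory.volume L ≤ ENNReal.ofReal (C₁ * (1 + ‖ξ‖) ^ α) ∧ ‖ξ‖ ∈ L
  angular : ∃ C₂ : ℝ, 0 < C₂ ∧ ∀ i, ∃ φi : ℝ, ∀ ξ ∈ Q i, ∃ φ : ℝ,
    ξ = ‖ξ‖ • vec2 (Real.cos φ) (Real.sin φ) ∧
    min |φ - φi| |φ - (φi + Real.pi)| ≤ C₂ * (1 + ‖ξ‖) ^ (β - 1)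

/-- On any `(α,β)` covering of `ℝ²`, the quantity `1 + |ξ|` is uniformly
comparable for points of the same member: there is `C' ≥ 1` such that for every `i`
and all `ξ, η ∈ Q i`, `(1/C')·(1 + |η|) ≤ 1 + |ξ| ≤ C'·(1 + |η|)`. -/
theorem abCovering_norm_equivalence (α β : ℝ)
    (hα : α ∈ Set.Icc (0:ℝ) 1) (hβ : β ∈ Set.Icc (0:ℝ) 1)
    {ι : Type*} (Q : ι → Set R2) (hQ : IsABCovering α β Q) :
    ∃ C' : ℝ, 1 ≤ C' ∧ ∀ i : ι, ∀ ξ ∈ Q i, ∀ η ∈ Q i,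
      (1 / C') * (1 + ‖η‖) ≤ 1 + ‖ξ‖ ∧ 1 + ‖ξ‖ ≤ C' * (1 + ‖η‖) := by
  obtain ⟨C₁, hC₁pos, hrad⟩ := hQ.radial
  -- key estimate: for ξ, η in the same Q i, ‖ξ‖ - ‖η‖ ≤ C₁ * (1 + ‖η‖)
  have key : ∀ i : ι, ∀ ξ ∈ Q i, ∀ η ∈ Q i, ‖ξ‖ - ‖η‖ ≤ C₁ * (1 + ‖η‖) := by
    intro i ξ hξ η hη
    obtain ⟨L, _, hLconn, hL⟩ := hrad i
    obtain ⟨hvolη, hmemη⟩ := hL η hη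
    obtain ⟨_, hmemξ⟩ := hL ξ hξ
    have hne : 0 ≤ 1 + ‖η‖ := by positivity
    have hrpow : (1 + ‖η‖) ^ α ≤ 1 + ‖η‖ := by
      calc (1 + ‖η‖) ^ α ≤ (1 + ‖η‖) ^ (1:ℝ) :=
            Real.rpow_le_rpow_of_exponent_le (by linarith [norm_nonneg η]) hα.2
        _ = 1 + ‖η‖ := Real.rpow_one _
    have hIcc : Set.Icc ‖η‖ ‖ξ‖ ⊆ L := hLconn.out hmemη hmemξ
    have hvol : MeasureTheory.volume (Set.Icc ‖η‖ ‖ξ‖) ≤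
        ENNReal.ofReal (C₁ * (1 + ‖η‖) ^ α) :=
      le_trans (MeasureTheory.measure_mono hIcc) hvolη
    rw [Real.volume_Icc] at hvol
    have h1 : ‖ξ‖ - ‖η‖ ≤ C₁ * (1 + ‖η‖) ^ α := by
      rcases le_or_gt (‖ξ‖ - ‖η‖) 0 with h | h
      · calc ‖ξ‖ - ‖η‖ ≤ 0 := h
          _ ≤ C₁ * (1 + ‖η‖) ^ α := by positivity
      · exact (ENNReal.ofReal_le_ofReal_iff (by positivity)).mp hvol
    calc ‖ξ‖ - ‖η‖ ≤ C₁ * (1 + ‖η‖) ^ α := h1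
      _ ≤ C₁ * (1 + ‖η‖) := by nlinarith
  refine ⟨1 + C₁, by linarith, fun i ξ hξ η hη => ?_⟩
  have h1 := key i ξ hξ η hη
  have h2 := key i η hη ξ hξ
  have hξ0 := norm_nonneg ξ
  have hη0 := norm_nonneg η
  have hCpos : (0:ℝ) < 1 + C₁ := by linarith
  constructor
  · rw [div_mul_eq_mul_div, one_mul, div_le_iff₀ hCpos]
    nlinarith
  · nlinarith
end
end

section
/- Let B be an invertible 2×2 real matrix and let φ₀ ∈ ℝ. Then there exists an angle ψ₀ ∈ ℝ with the following property: for every r ≥ 0 and φ ∈ ℝ there exist r' ≥ 0 and φ' ∈ ℝ such that B·(r·(cos φ, sin φ)) = r'·(cos φ', sin φ') and min over ω ∈ {0, π} of |φ' − (ψ₀ + ω)| is at most (π/2)·‖B^{−1}‖²·|det B|·(min over θ ∈ {0, π} of |φ − (φ₀ + θ)|), where ‖·‖ denotes the operator norm induced by the Euclidean norm on ℝ². -/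
noncomputable section

open Real Set MeasureTheory Pointwise
open scoped ENNReal

/-- Jordan-type inequality: for `|x| ≤ π/2` we have `|x| ≤ (π/2)·|sin x|`. -/
lemma aux_abs_le_sin (x : ℝ) (h : |x| ≤ π / 2) : |x| ≤ π / 2 * |Real.sin x| := by
  have h1 : 2 / π * |x| ≤ |Real.sin x| := Real.mul_abs_le_abs_sin h
  have hπ : (0:ℝ) < π := Real.pi_pos
  calc |x| = π / 2 * (2 / π * |x|) := by field_simp
    _ ≤ π / 2 * |Real.sin x| := by
        exact mul_le_mul_of_nonneg_left h1 (by positivity)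


/-- Let `B` be an invertible `2×2` real matrix and `φ₀ ∈ ℝ`. Then there
is an angle `ψ₀ ∈ ℝ` such that: for all `r ≥ 0` and `φ ∈ ℝ` there are `r' ≥ 0` and
`φ' ∈ ℝ` with `B(r·(cos φ, sin φ)) = r'·(cos φ', sin φ')` and
`min_{ω∈{0,π}} |φ' − (ψ₀+ω)| ≤ (π/2)·‖B⁻¹‖²·|det B|·min_{θ∈{0,π}} |φ − (φ₀+θ)|`,
`‖·‖` being the operator norm induced by the Euclidean norm on `ℝ²`. -/
theorem linearMap_effect_on_angle (B : Matrix (Fin 2) (Fin 2) ℝ) (hB : IsUnit B.det)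
    (φ₀ : ℝ) :
    ∃ ψ₀ : ℝ, ∀ r : ℝ, 0 ≤ r → ∀ φ : ℝ, ∃ r' φ' : ℝ, 0 ≤ r' ∧
      mulV B (r • vec2 (Real.cos φ) (Real.sin φ)) = r' • vec2 (Real.cos φ') (Real.sin φ') ∧
      min |φ' - ψ₀| |φ' - (ψ₀ + Real.pi)|
        ≤ Real.pi / 2 * ‖Matrix.toEuclideanCLM (𝕜 := ℝ) B⁻¹‖ ^ 2 * |B.det| *
            min |φ - φ₀| |φ - (φ₀ + Real.pi)| := by
  have hπ : (0:ℝ) < π := Real.pi_pos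
  have h2π : (0:ℝ) < 2 * π := by linarith
  have hinv : B⁻¹ * B = 1 := Matrix.nonsing_inv_mul B hB
  set N := ‖Matrix.toEuclideanCLM (𝕜 := ℝ) B⁻¹‖ with hNdef
  have hN0 : 0 ≤ N := norm_nonneg _
  -- package: for every `φ`, the image vector has positive norm `m` bounded below via `N`,
  -- and an angle `ψ` with the expected cosine and sine.
  have pack : ∀ φ : ℝ, ∃ m ψ : ℝ, 0 < m ∧ 1 ≤ N * m ∧
      Real.cos ψ = (B.mulVec ![Real.cos φ, Real.sin φ]) 0 / m ∧
      Real.sin ψ = (B.mulVec ![Real.cos φ, Real.sin φ]) 1 / m := by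
    intro φ
    set z := B.mulVec ![Real.cos φ, Real.sin φ] with hzdef
    set m := ‖(⟨z 0, z 1⟩ : ℂ)‖ with hmdef
    have hm_nonneg : 0 ≤ m := norm_nonneg _
    have hBv : B⁻¹.mulVec z = ![Real.cos φ, Real.sin φ] := by
      rw [hzdef, Matrix.mulVec_mulVec, hinv, Matrix.one_mulVec]
    have h1 : ‖(WithLp.equiv 2 (Fin 2 → ℝ)).symm ![Real.cos φ, Real.sin φ]‖ = 1 := by
      rw [EuclideanSpace.norm_eq]
      simp only [Fin.sum_univ_two, WithLp.equiv_symm_apply, PiLp.toLp_apply, Matrix.cons_val_zero,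
        Matrix.cons_val_one, Matrix.head_cons, Real.norm_eq_abs, sq_abs]
      rw [Real.cos_sq_add_sin_sq, Real.sqrt_one]
    have h2 : ‖(WithLp.equiv 2 (Fin 2 → ℝ)).symm z‖ = m := by
      rw [EuclideanSpace.norm_eq, hmdef, Complex.norm_def, Complex.normSq_mk]
      simp only [Fin.sum_univ_two, WithLp.equiv_symm_apply, PiLp.toLp_apply, Real.norm_eq_abs, sq_abs]
      ring_nf
    have hle : 1 ≤ N * m := by
      have := (Matrix.toEuclideanCLM (𝕜 := ℝ) B⁻¹).le_opNorm
        ((WithLp.equiv 2 (Fin 2 → ℝ)).symm z)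
      rw [WithLp.equiv_symm_apply, Matrix.toEuclideanCLM_toLp, hBv, ← WithLp.equiv_symm_apply, h1, h2] at this
      exact this
    have hm_pos : 0 < m := by
      rcases hm_nonneg.lt_or_eq with h | h
      · exact h
      · exfalso; rw [← h] at hle; nlinarith
    have hz_ne : (⟨z 0, z 1⟩ : ℂ) ≠ 0 := by
      intro h
      rw [hmdef, h] at hm_pos
      simp at hm_pos
    refine ⟨m, Complex.arg ⟨z 0, z 1⟩, hm_pos, hle, ?_, ?_⟩
    · rw [Complex.cos_arg hz_ne]
    · rw [Complex.sin_arg]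
  obtain ⟨M, ψ₀, hM0, hNM, hcψ₀, hsψ₀⟩ := pack φ₀
  refine ⟨ψ₀, fun r hr φ => ?_⟩
  obtain ⟨m, ψ, hm0, hNm, hcψ, hsψ⟩ := pack φ
  rcases hr.lt_or_eq with hr0 | hr0
  swap
  · -- the case r = 0
    refine ⟨0, ψ₀, le_refl _, ?_, ?_⟩
    · rw [← hr0]
      simp [mulV]
    · have hmin : min |ψ₀ - ψ₀| |ψ₀ - (ψ₀ + π)| = 0 := by
        rw [sub_self, abs_zero]
        exact min_eq_left (abs_nonneg _)
      rw [hmin]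
      positivity
  -- main case r > 0
  set φ' := toIocMod h2π (ψ₀ - π / 2) ψ with hφ'def
  obtain ⟨k, hk⟩ : ∃ k : ℤ, φ' = ψ + k * (2 * π) := by
    refine ⟨-toIocDiv h2π (ψ₀ - π / 2) ψ, ?_⟩
    have h := self_sub_toIocDiv_zsmul h2π (ψ₀ - π / 2) ψ
    push_cast [zsmul_eq_mul] at h ⊢
    linarith
  have hcφ' : Real.cos φ' = Real.cos ψ := by rw [hk, Real.cos_add_int_mul_two_pi]
  have hsφ' : Real.sin φ' = Real.sin ψ := by rw [hk, Real.sin_add_int_mul_two_pi]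
  refine ⟨r * m, φ', by positivity, ?_, ?_⟩
  · -- the vector identity
    unfold mulV vec2
    rw [← _root_.map_smul]
    simp only [ContinuousLinearEquiv.apply_symm_apply]
    rw [show B.mulVec (r • ![Real.cos φ, Real.sin φ])
        = (r * m) • ![Real.cos φ', Real.sin φ'] from ?_, _root_.map_smul]
    rw [Matrix.mulVec_smul]
    funext i
    fin_cases i <;>
      simp only [Pi.smul_apply, Matrix.cons_val_zero, Matrix.cons_val_one, Matrix.head_cons,
        smul_eq_mul, hcφ', hsφ', hcψ, hsψ, Fin.zero_eta, Fin.mk_one] <;>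
      · field_simp
  · -- the angle inequality
    obtain ⟨hl, hu⟩ := toIocMod_mem_Ioc h2π (ψ₀ - π / 2) ψ
    rw [← hφ'def] at hl hu
    -- Step A : min ≤ (π/2)|sin (φ' - ψ₀)|
    have hA : min |φ' - ψ₀| |φ' - (ψ₀ + π)| ≤ π / 2 * |Real.sin (φ' - ψ₀)| := by
      rcases le_or_gt φ' (ψ₀ + π / 2) with hc | hc
      · have hx : |φ' - ψ₀| ≤ π / 2 := abs_le.2 ⟨by linarith, by linarith⟩
        exact le_trans (min_le_left _ _) (aux_abs_le_sin _ hx)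
      · have hx : |φ' - (ψ₀ + π)| ≤ π / 2 := abs_le.2 ⟨by linarith, by linarith⟩
        have h1 := aux_abs_le_sin _ hx
        have hsin : |Real.sin (φ' - (ψ₀ + π))| = |Real.sin (φ' - ψ₀)| := by
          rw [show φ' - (ψ₀ + π) = (φ' - ψ₀) - π by ring, Real.sin_sub_pi, abs_neg]
        rw [hsin] at h1
        exact le_trans (min_le_right _ _) h1
    -- Step B : sin (φ' - ψ₀) and sin (ψ - ψ₀) coincide
    have hB' : Real.sin (φ' - ψ₀) = Real.sin (ψ - ψ₀) := by
      rw [hk, show ψ + k * (2 * π) - ψ₀ = (ψ - ψ₀) + k * (2 * π) by ring,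
        Real.sin_add_int_mul_two_pi]
    -- Step C+D : sin (ψ - ψ₀) in terms of det B
    have hCD : Real.sin (ψ - ψ₀) = B.det * Real.sin (φ - φ₀) / (m * M) := by
      rw [Real.sin_sub, hcψ, hsψ, hcψ₀, hsψ₀, Real.sin_sub, Matrix.det_fin_two]
      simp only [Matrix.mulVec, dotProduct, Fin.sum_univ_two, Matrix.cons_val_zero,
        Matrix.cons_val_one, Matrix.head_cons]
      field_simp
      ring
    -- Step E : |sin (φ - φ₀)| ≤ min distance
    have hE : |Real.sin (φ - φ₀)| ≤ min |φ - φ₀| |φ - (φ₀ + π)| := by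
      refine le_min Real.abs_sin_le_abs ?_
      have : |Real.sin (φ - φ₀)| = |Real.sin (φ - (φ₀ + π))| := by
        rw [show φ - (φ₀ + π) = (φ - φ₀) - π by ring, Real.sin_sub_pi, abs_neg]
      rw [this]
      exact Real.abs_sin_le_abs
    -- put everything together
    have hmM : (0:ℝ) < m * M := mul_pos hm0 hM0
    have habs : |Real.sin (ψ - ψ₀)| = |B.det| * |Real.sin (φ - φ₀)| / (m * M) := by
      rw [hCD, abs_div, abs_mul, abs_of_pos hmM]
    calc min |φ' - ψ₀| |φ' - (ψ₀ + π)|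
        ≤ π / 2 * |Real.sin (φ' - ψ₀)| := hA
      _ = π / 2 * (|B.det| * |Real.sin (φ - φ₀)| / (m * M)) := by rw [hB', habs]
      _ = π / 2 * (|B.det| * |Real.sin (φ - φ₀)|) / (m * M) := by ring
      _ ≤ π / 2 * N ^ 2 * |B.det| * min |φ - φ₀| |φ - (φ₀ + π)| := by
          rw [div_le_iff₀ hmM]
          have hprod : (1:ℝ) ≤ (N * m) * (N * M) := by nlinarith
          have hds : |B.det| * |Real.sin (φ - φ₀)|
              ≤ |B.det| * min |φ - φ₀| |φ - (φ₀ + π)| :=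
            mul_le_mul_of_nonneg_left hE (abs_nonneg _)
          have hd0 : (0:ℝ) ≤ |B.det| * min |φ - φ₀| |φ - (φ₀ + π)| :=
            le_trans (by positivity) hds
          have h2 : |B.det| * min |φ - φ₀| |φ - (φ₀ + π)|
              ≤ |B.det| * min |φ - φ₀| |φ - (φ₀ + π)| * ((N * m) * (N * M)) :=
            le_mul_of_one_le_right hd0 hprod
          calc π / 2 * (|B.det| * |Real.sin (φ - φ₀)|)
              ≤ π / 2 * (|B.det| * min |φ - φ₀| |φ - (φ₀ + π)| * ((N * m) * (N * M))) := by
                apply mul_le_mul_of_nonneg_left (hds.trans h2) (by positivity)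
            _ = π / 2 * N ^ 2 * |B.det| * min |φ - φ₀| |φ - (φ₀ + π)| * (m * M) := by ring
end
end

section
/- Let N, γ ∈ [0,∞), L, τ ∈ (0,∞), M ∈ ℝ, and 0 < β₁ ≤ β₂. Let f : ℝ → ℂ be measurable and suppose there exist C₀ ≥ 0 and q ≥ 1 + (N+2)/τ such that |f(x)| ≤ C₀·(1+|x|)^{−q} for all x ∈ ℝ. Then, with C := 2^{4+N+τ+τq}, the sum over all k ∈ ℤ with k + M ≥ 0 of |γ·(k+M)|^N · (∫ from β₁·(k+M)−L to β₂·(k+M)+L of |f(x)| dx)^τ is at most C·(β₂/β₁)^τ·(γ/β₁)^N·C₀^τ·(1 + L^{τ+N})·(1 + (L+1)/β₁). -/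
noncomputable section

open Real Set MeasureTheory Pointwise
open scoped ENNReal

-- (a+b)^s ≤ 2^s (a^s + b^s)
lemma aux_add_rpow_le {a b s : ℝ} (ha : 0 ≤ a) (hb : 0 ≤ b) (hs : 0 ≤ s) :
    (a + b) ^ s ≤ 2 ^ s * (a ^ s + b ^ s) := by
  rcases le_total a b with h | h
  · calc (a + b) ^ s ≤ (2 * b) ^ s := by
          apply Real.rpow_le_rpow (by linarith) (by linarith) hs
    _ = 2 ^ s * b ^ s := Real.mul_rpow (by norm_num) hb
    _ ≤ 2 ^ s * (a ^ s + b ^ s) := by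
          have := Real.rpow_nonneg ha s
          have h2 : (0:ℝ) ≤ (2:ℝ) ^ s := Real.rpow_nonneg (by norm_num) s
          nlinarith
  · calc (a + b) ^ s ≤ (2 * a) ^ s := by
          apply Real.rpow_le_rpow (by linarith) (by linarith) hs
    _ = 2 ^ s * a ^ s := Real.mul_rpow (by norm_num) ha
    _ ≤ 2 ^ s * (a ^ s + b ^ s) := by
          have := Real.rpow_nonneg hb s
          have h2 : (0:ℝ) ≤ (2:ℝ) ^ s := Real.rpow_nonneg (by norm_num) s
          nlinarith

lemma aux_one_add_rpow {L s : ℝ} (hL : 0 < L) (hs : 0 ≤ s) :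
    (L + 1) ^ s ≤ 2 ^ s * (1 + L ^ s) := by
  rcases le_total L 1 with h | h
  · calc (L + 1) ^ s ≤ 2 ^ s := Real.rpow_le_rpow (by linarith) (by linarith) hs
    _ ≤ 2 ^ s * (1 + L ^ s) := by
        have := Real.rpow_nonneg hL.le s
        have h2 : (0:ℝ) ≤ (2:ℝ) ^ s := Real.rpow_nonneg (by norm_num) s
        nlinarith
  · calc (L + 1) ^ s ≤ (2 * L) ^ s := Real.rpow_le_rpow (by linarith) (by linarith) hs
    _ = 2 ^ s * L ^ s := Real.mul_rpow (by norm_num) hL.le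
    _ ≤ 2 ^ s * (1 + L ^ s) := by
        have h2 : (0:ℝ) ≤ (2:ℝ) ^ s := Real.rpow_nonneg (by norm_num) s
        nlinarith [Real.rpow_nonneg hL.le s]

-- L^τ (L+1)^N ≤ 2^N (1 + L^(τ+N))
lemma aux_mixed {L τ N : ℝ} (hL : 0 < L) (hτ : 0 ≤ τ) (hN : 0 ≤ N) :
    L ^ τ * (L + 1) ^ N ≤ 2 ^ N * (1 + L ^ (τ + N)) := by
  have h2 : (0:ℝ) ≤ (2:ℝ) ^ N := Real.rpow_nonneg (by norm_num) N
  rcases le_total L 1 with h | h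
  · have h1 : L ^ τ ≤ 1 := Real.rpow_le_one hL.le h hτ
    have h3 : (L + 1) ^ N ≤ 2 ^ N := Real.rpow_le_rpow (by linarith) (by linarith) hN
    have h4 : (0:ℝ) ≤ L ^ τ := Real.rpow_nonneg hL.le τ
    have h5 : (0:ℝ) ≤ (L+1) ^ N := Real.rpow_nonneg (by linarith) N
    nlinarith [Real.rpow_nonneg hL.le (τ+N)]
  · have h3 : (L + 1) ^ N ≤ (2 * L) ^ N := Real.rpow_le_rpow (by linarith) (by linarith) hN
    have h4 : (2 * L) ^ N = 2 ^ N * L ^ N := Real.mul_rpow (by norm_num) hL.le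
    have h5 : L ^ τ * L ^ N = L ^ (τ + N) := (Real.rpow_add hL τ N).symm
    have h6 : (0:ℝ) ≤ L ^ τ := Real.rpow_nonneg hL.le τ
    calc L ^ τ * (L + 1) ^ N ≤ L ^ τ * (2 ^ N * L ^ N) := by rw [← h4]; exact mul_le_mul_of_nonneg_left h3 h6
    _ = 2 ^ N * L ^ (τ + N) := by rw [← h5]; ring
    _ ≤ 2 ^ N * (1 + L ^ (τ + N)) := by nlinarith [Real.rpow_nonneg hL.le (τ+N)]

-- integral bound
lemma aux_int_bound (f : ℝ → ℂ) (C₀ q : ℝ) (hC₀ : 0 ≤ C₀) (hq : 0 ≤ q)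
    (hbound : ∀ x : ℝ, ‖f x‖ ≤ C₀ * (1 + |x|) ^ (-q)) (a b : ℝ) :
    ∫ x in Set.Icc a b, ‖f x‖ ≤ C₀ * (1 + max a 0) ^ (-q) * max (b - a) 0 := by
  have hm : (0:ℝ) ≤ max a 0 := le_max_right a 0
  have key : ∀ x ∈ Set.Icc a b, ‖(‖f x‖)‖ ≤ C₀ * (1 + max a 0) ^ (-q) := by
    intro x hx
    rw [norm_norm]
    refine (hbound x).trans ?_
    have hxm : max a 0 ≤ |x| := by
      rcases le_total a 0 with h | h
      · simpa [max_eq_right h] using abs_nonneg x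
      · rw [max_eq_left h]; exact hx.1.trans (le_abs_self x)
    have : (1 + |x|) ^ (-q) ≤ (1 + max a 0) ^ (-q) :=
      Real.rpow_le_rpow_of_nonpos (by linarith) (by linarith) (by linarith)
    exact mul_le_mul_of_nonneg_left this hC₀
  have h1 : ‖∫ x in Set.Icc a b, ‖f x‖‖ ≤ (C₀ * (1 + max a 0) ^ (-q)) * (volume (Set.Icc a b)).toReal :=
    norm_setIntegral_le_of_norm_le_const (by simp [Real.volume_Icc]) key
  have h2 : (volume (Set.Icc a b)).toReal = max (b - a) 0 := by
    rw [Real.volume_Icc, ENNReal.toReal_ofReal']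
  rw [h2] at h1
  calc ∫ x in Set.Icc a b, ‖f x‖ ≤ ‖∫ x in Set.Icc a b, ‖f x‖‖ := le_abs_self _
  _ ≤ C₀ * (1 + max a 0) ^ (-q) * max (b - a) 0 := h1

set_option maxHeartbeats 2000000 in
lemma aux_caseA {N γ L τ β₁ β₂ C₀ q t : ℝ}
    (hN : 0 ≤ N) (hγ : 0 ≤ γ) (hL : 0 < L) (hτ : 0 < τ) (hβ₁ : 0 < β₁) (hβ₁₂ : β₁ ≤ β₂)
    (hC₀ : 0 ≤ C₀) (hqτ : τ + (N + 2) ≤ τ * q) (ht : 0 ≤ t) (hcase : β₁ * t ≤ 2 * (L + 1)) :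
    (γ * t) ^ N * (C₀ * (β₂ * t + 2 * L) * (1 + max (β₁ * t - L) 0) ^ (-q)) ^ τ ≤
      2 ^ (2 * τ + N + 1) * (C₀ ^ τ * ((γ / β₁) ^ N * ((β₂ / β₁) ^ τ * (1 + L ^ (τ + N))))) := by
  have hq0 : 0 < q := by nlinarith
  have hm0 : (0 : ℝ) ≤ max (β₁ * t - L) 0 := le_max_right _ _
  have hm1 : (1 : ℝ) ≤ 1 + max (β₁ * t - L) 0 := by linarith
  have hβ₂ : 0 < β₂ := lt_of_lt_of_le hβ₁ hβ₁₂
  have hBB : 0 < β₂ / β₁ := div_pos hβ₂ hβ₁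
  have hGG : 0 ≤ γ / β₁ := div_nonneg hγ hβ₁.le
  have hB1 : (1:ℝ) ≤ (β₂ / β₁) ^ τ := Real.one_le_rpow ((one_le_div hβ₁).mpr hβ₁₂) hτ.le
  have hA0 : (0:ℝ) ≤ (γ / β₁) ^ N := Real.rpow_nonneg hGG N
  have hD0 : (0:ℝ) ≤ C₀ ^ τ := Real.rpow_nonneg hC₀ τ
  have hW0 : (0:ℝ) ≤ 1 + L ^ (τ + N) := by nlinarith [Real.rpow_nonneg hL.le (τ + N)]
  have hP1 : (0:ℝ) ≤ (L + 1) ^ τ := Real.rpow_nonneg (by linarith) τ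
  have hP2 : (0:ℝ) ≤ (L + 1) ^ N := Real.rpow_nonneg (by linarith) N
  have hQ1 : (0:ℝ) ≤ L ^ τ := Real.rpow_nonneg hL.le τ
  have h2τ : (0:ℝ) ≤ (2:ℝ) ^ τ := Real.rpow_nonneg (by norm_num) τ
  have h2N : (0:ℝ) ≤ (2:ℝ) ^ N := Real.rpow_nonneg (by norm_num) N
  have hB0 : (0:ℝ) ≤ (β₂ / β₁) ^ τ := le_trans zero_le_one hB1
  have hrw : ∀ a b : ℝ, (2:ℝ) ^ a * (2:ℝ) ^ b = 2 ^ (a + b) := fun a b =>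
    (Real.rpow_add two_pos a b).symm
  have hmono2 : ∀ a b : ℝ, a ≤ b → (2:ℝ) ^ a ≤ 2 ^ b := fun _ _ h =>
    Real.rpow_le_rpow_of_exponent_le one_le_two h
  have hPP : (L + 1) ^ τ * (L + 1) ^ N = (L + 1) ^ (τ + N) := (Real.rpow_add (by linarith) τ N).symm
  have e5 : (L + 1) ^ τ * (L + 1) ^ N ≤ 2 ^ (τ + N) * (1 + L ^ (τ + N)) := by
    rw [hPP]; exact aux_one_add_rpow hL (by linarith)
  have e6 : L ^ τ * (L + 1) ^ N ≤ 2 ^ N * (1 + L ^ (τ + N)) := aux_mixed hL hτ.le hN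
  set Z : ℝ := C₀ ^ τ * ((γ / β₁) ^ N * ((β₂ / β₁) ^ τ * (1 + L ^ (τ + N)))) with hZ
  have hZ0 : 0 ≤ Z := by
    apply mul_nonneg hD0 (mul_nonneg hA0 (mul_nonneg hB0 hW0))
  have s1 : ((γ / β₁) ^ N * C₀ ^ τ * (β₂ / β₁) ^ τ) * ((L + 1) ^ τ * (L + 1) ^ N)
      ≤ 2 ^ (τ + N) * Z := by
    calc ((γ / β₁) ^ N * C₀ ^ τ * (β₂ / β₁) ^ τ) * ((L + 1) ^ τ * (L + 1) ^ N)
        ≤ ((γ / β₁) ^ N * C₀ ^ τ * (β₂ / β₁) ^ τ) * (2 ^ (τ + N) * (1 + L ^ (τ + N))) :=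
          mul_le_mul_of_nonneg_left e5 (by positivity)
    _ = 2 ^ (τ + N) * Z := by rw [hZ]; ring
  have s2 : ((γ / β₁) ^ N * C₀ ^ τ) * (L ^ τ * (L + 1) ^ N) ≤ 2 ^ N * Z := by
    calc ((γ / β₁) ^ N * C₀ ^ τ) * (L ^ τ * (L + 1) ^ N)
        ≤ ((γ / β₁) ^ N * C₀ ^ τ) * (2 ^ N * (1 + L ^ (τ + N))) :=
          mul_le_mul_of_nonneg_left e6 (mul_nonneg hA0 hD0)
    _ ≤ ((γ / β₁) ^ N * C₀ ^ τ) * (2 ^ N * (1 + L ^ (τ + N))) * ((β₂ / β₁) ^ τ) :=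
          le_mul_of_one_le_right (by positivity) hB1
    _ = 2 ^ N * Z := by rw [hZ]; ring
  have final : ∀ e1 e2 : ℝ, e1 ≤ 2 * τ + N → e2 ≤ 2 * τ + N →
      (2:ℝ) ^ e1 * Z + 2 ^ e2 * Z ≤ 2 ^ (2 * τ + N + 1) * Z := by
    intro e1 e2 h1 h2
    have := hmono2 e1 (2*τ+N) h1
    have := hmono2 e2 (2*τ+N) h2
    have hsplit : (2:ℝ) ^ (2*τ+N+1) = 2 ^ (2*τ+N) * 2 := by
      rw [show 2*τ+N+1 = (2*τ+N) + 1 by ring, Real.rpow_add two_pos, Real.rpow_one]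
    rw [hsplit]; nlinarith
  rcases le_or_gt (β₁ * t) (L + 1) with h1 | h1
  · -- crude subcase
    have hz1 : (1 + max (β₁ * t - L) 0) ^ (-q) ≤ 1 :=
      Real.rpow_le_one_of_one_le_of_nonpos hm1 (by linarith)
    have hz0 : (0:ℝ) ≤ (1 + max (β₁ * t - L) 0) ^ (-q) := Real.rpow_nonneg (by linarith) _
    have ha1 : (γ * t) ^ N ≤ (γ / β₁) ^ N * (L + 1) ^ N := by
      rw [← Real.mul_rpow hGG (by linarith)]
      refine Real.rpow_le_rpow (mul_nonneg hγ ht) ?_ hN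
      rw [div_mul_eq_mul_div, le_div_iff₀ hβ₁]
      nlinarith
    have hlen0 : (0:ℝ) ≤ β₂ * t + 2 * L := by nlinarith
    have hbase : C₀ * (β₂ * t + 2 * L) * (1 + max (β₁ * t - L) 0) ^ (-q)
        ≤ C₀ * (β₂ / β₁ * (L + 1) + 2 * L) := by
      have hb2 : β₂ * t + 2 * L ≤ β₂ / β₁ * (L + 1) + 2 * L := by
        rw [div_mul_eq_mul_div]
        have : β₂ * t ≤ β₂ * (L + 1) / β₁ := by
          rw [le_div_iff₀ hβ₁]; nlinarith
        linarith
      calc C₀ * (β₂ * t + 2 * L) * (1 + max (β₁ * t - L) 0) ^ (-q)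
          ≤ C₀ * (β₂ * t + 2 * L) * 1 := mul_le_mul_of_nonneg_left hz1 (mul_nonneg hC₀ hlen0)
      _ = C₀ * (β₂ * t + 2 * L) := by ring
      _ ≤ C₀ * (β₂ / β₁ * (L + 1) + 2 * L) := mul_le_mul_of_nonneg_left hb2 hC₀
    have hbase0 : (0:ℝ) ≤ C₀ * (β₂ * t + 2 * L) * (1 + max (β₁ * t - L) 0) ^ (-q) := by
      exact mul_nonneg (mul_nonneg hC₀ hlen0) hz0
    have ha2 : (C₀ * (β₂ * t + 2 * L) * (1 + max (β₁ * t - L) 0) ^ (-q)) ^ τ ≤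
        C₀ ^ τ * (β₂ / β₁ * (L + 1) + 2 * L) ^ τ := by
      rw [← Real.mul_rpow hC₀ (by positivity)]
      exact Real.rpow_le_rpow hbase0 hbase hτ.le
    have ha3 : (β₂ / β₁ * (L + 1) + 2 * L) ^ τ ≤
        2 ^ τ * ((β₂ / β₁) ^ τ * (L + 1) ^ τ + 2 ^ τ * L ^ τ) := by
      calc (β₂ / β₁ * (L + 1) + 2 * L) ^ τ
          ≤ 2 ^ τ * ((β₂ / β₁ * (L + 1)) ^ τ + (2 * L) ^ τ) :=
            aux_add_rpow_le (by positivity) (by linarith) hτ.le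
      _ = 2 ^ τ * ((β₂ / β₁) ^ τ * (L + 1) ^ τ + 2 ^ τ * L ^ τ) := by
            rw [Real.mul_rpow hBB.le (by linarith), Real.mul_rpow (by norm_num) hL.le]
    have key : (γ * t) ^ N * (C₀ * (β₂ * t + 2 * L) * (1 + max (β₁ * t - L) 0) ^ (-q)) ^ τ ≤
        ((γ / β₁) ^ N * (L + 1) ^ N) * (C₀ ^ τ * (2 ^ τ * ((β₂ / β₁) ^ τ * (L + 1) ^ τ + 2 ^ τ * L ^ τ))) :=
      mul_le_mul ha1 (ha2.trans (mul_le_mul_of_nonneg_left ha3 hD0))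
        (Real.rpow_nonneg hbase0 τ) (by positivity)
    refine key.trans ?_
    calc ((γ / β₁) ^ N * (L + 1) ^ N) * (C₀ ^ τ * (2 ^ τ * ((β₂ / β₁) ^ τ * (L + 1) ^ τ + 2 ^ τ * L ^ τ)))
        = 2 ^ τ * (((γ / β₁) ^ N * C₀ ^ τ * (β₂ / β₁) ^ τ) * ((L + 1) ^ τ * (L + 1) ^ N))
          + (2 ^ τ * 2 ^ τ) * (((γ / β₁) ^ N * C₀ ^ τ) * (L ^ τ * (L + 1) ^ N)) := by ring
    _ ≤ 2 ^ τ * (2 ^ (τ + N) * Z) + (2 ^ τ * 2 ^ τ) * (2 ^ N * Z) := by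
        apply add_le_add
        · exact mul_le_mul_of_nonneg_left s1 h2τ
        · exact mul_le_mul_of_nonneg_left s2 (mul_nonneg h2τ h2τ)
    _ = 2 ^ (τ + (τ + N)) * Z + 2 ^ (τ + τ + N) * Z := by
        simp only [← mul_assoc, hrw]
    _ ≤ 2 ^ (2 * τ + N + 1) * Z := final _ _ (by linarith) (by linarith)
  · -- decay subcase: L + 1 < β₁ t ≤ 2(L+1)
    have hmm : max (β₁ * t - L) 0 = β₁ * t - L := max_eq_left (by linarith)
    have hz1 : (1 + max (β₁ * t - L) 0) ^ (-q) ≤ 2 ^ (-q) := by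
      apply Real.rpow_le_rpow_of_nonpos two_pos (by rw [hmm]; linarith) (by linarith)
    have hz0 : (0:ℝ) ≤ (1 + max (β₁ * t - L) 0) ^ (-q) := Real.rpow_nonneg (by linarith) _
    have h2q0 : (0:ℝ) ≤ (2:ℝ) ^ (-q) := Real.rpow_nonneg (by norm_num) _
    have ha1 : (γ * t) ^ N ≤ 2 ^ N * ((γ / β₁) ^ N * (L + 1) ^ N) := by
      rw [← Real.mul_rpow hGG (by linarith), ← Real.mul_rpow (by norm_num) (by positivity)]
      refine Real.rpow_le_rpow (mul_nonneg hγ ht) ?_ hN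
      rw [show 2 * (γ / β₁ * (L + 1)) = 2 * γ * (L + 1) / β₁ from by ring, le_div_iff₀ hβ₁]
      nlinarith
    have hlen0 : (0:ℝ) ≤ β₂ * t + 2 * L := by nlinarith
    have hbase : C₀ * (β₂ * t + 2 * L) * (1 + max (β₁ * t - L) 0) ^ (-q)
        ≤ (C₀ * (2 * (β₂ / β₁) * (L + 1) + 2 * L)) * 2 ^ (-q) := by
      apply mul_le_mul ?_ hz1 hz0 (by positivity)
      have : β₂ * t ≤ 2 * (β₂ / β₁) * (L + 1) := by
        rw [mul_comm (2:ℝ) (β₂/β₁), mul_assoc, div_mul_eq_mul_div, le_div_iff₀ hβ₁]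
        nlinarith
      have := mul_le_mul_of_nonneg_left (show β₂ * t + 2*L ≤ 2*(β₂/β₁)*(L+1) + 2*L by linarith) hC₀
      linarith
    have hbase0 : (0:ℝ) ≤ C₀ * (β₂ * t + 2 * L) * (1 + max (β₁ * t - L) 0) ^ (-q) :=
      mul_nonneg (mul_nonneg hC₀ hlen0) hz0
    have ha2 : (C₀ * (β₂ * t + 2 * L) * (1 + max (β₁ * t - L) 0) ^ (-q)) ^ τ ≤
        C₀ ^ τ * (2 * (β₂ / β₁) * (L + 1) + 2 * L) ^ τ * 2 ^ (-q * τ) := by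
      have h1' : (C₀ * (β₂ * t + 2 * L) * (1 + max (β₁ * t - L) 0) ^ (-q)) ^ τ ≤
          ((C₀ * (2 * (β₂ / β₁) * (L + 1) + 2 * L)) * 2 ^ (-q)) ^ τ :=
        Real.rpow_le_rpow hbase0 hbase hτ.le
      refine h1'.trans (le_of_eq ?_)
      have hlen1 : (0:ℝ) ≤ 2 * (β₂ / β₁) * (L + 1) + 2 * L := by positivity
      rw [Real.mul_rpow (mul_nonneg hC₀ hlen1) h2q0, Real.mul_rpow hC₀ hlen1,
        ← Real.rpow_mul (by norm_num : (0:ℝ) ≤ 2)]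
    have hlen1 : (0:ℝ) ≤ 2 * (β₂ / β₁) * (L + 1) + 2 * L := by positivity
    have hqτ0 : (0:ℝ) ≤ (2:ℝ) ^ (-q * τ) := Real.rpow_nonneg (by norm_num) _
    have ha3 : (2 * (β₂ / β₁) * (L + 1) + 2 * L) ^ τ ≤
        2 ^ τ * (2 ^ τ * ((β₂ / β₁) ^ τ * (L + 1) ^ τ) + 2 ^ τ * L ^ τ) := by
      calc (2 * (β₂ / β₁) * (L + 1) + 2 * L) ^ τ
          ≤ 2 ^ τ * ((2 * (β₂ / β₁) * (L + 1)) ^ τ + (2 * L) ^ τ) :=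
            aux_add_rpow_le (by positivity) (by linarith) hτ.le
      _ = 2 ^ τ * (2 ^ τ * ((β₂ / β₁) ^ τ * (L + 1) ^ τ) + 2 ^ τ * L ^ τ) := by
            rw [Real.mul_rpow (by positivity) (by linarith : (0:ℝ) ≤ L + 1),
              Real.mul_rpow (by norm_num) hBB.le, Real.mul_rpow (by norm_num) hL.le, mul_assoc]
    have key : (γ * t) ^ N * (C₀ * (β₂ * t + 2 * L) * (1 + max (β₁ * t - L) 0) ^ (-q)) ^ τ ≤
        (2 ^ N * ((γ / β₁) ^ N * (L + 1) ^ N)) *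
          (C₀ ^ τ * (2 ^ τ * (2 ^ τ * ((β₂ / β₁) ^ τ * (L + 1) ^ τ) + 2 ^ τ * L ^ τ)) * 2 ^ (-q * τ)) := by
      refine mul_le_mul ha1 (ha2.trans ?_) (Real.rpow_nonneg hbase0 τ) (by positivity)
      exact mul_le_mul_of_nonneg_right (mul_le_mul_of_nonneg_left ha3 hD0) hqτ0
    refine key.trans ?_
    calc (2 ^ N * ((γ / β₁) ^ N * (L + 1) ^ N)) *
          (C₀ ^ τ * (2 ^ τ * (2 ^ τ * ((β₂ / β₁) ^ τ * (L + 1) ^ τ) + 2 ^ τ * L ^ τ)) * 2 ^ (-q * τ))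
        = 2 ^ (N + (τ + (τ + -q * τ))) * (((γ / β₁) ^ N * C₀ ^ τ * (β₂ / β₁) ^ τ) * ((L + 1) ^ τ * (L + 1) ^ N))
          + 2 ^ (N + (τ + (τ + -q * τ))) * (((γ / β₁) ^ N * C₀ ^ τ) * (L ^ τ * (L + 1) ^ N)) := by
          simp only [← hrw]; ring
    _ ≤ 2 ^ (N + (τ + (τ + -q * τ))) * (2 ^ (τ + N) * Z)
          + 2 ^ (N + (τ + (τ + -q * τ))) * (2 ^ N * Z) := by
        have hp : (0:ℝ) ≤ (2:ℝ) ^ (N + (τ + (τ + -q * τ))) := Real.rpow_nonneg (by norm_num) _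
        exact add_le_add (mul_le_mul_of_nonneg_left s1 hp) (mul_le_mul_of_nonneg_left s2 hp)
    _ = 2 ^ (N + (τ + (τ + -q * τ)) + (τ + N)) * Z + 2 ^ (N + (τ + (τ + -q * τ)) + N) * Z := by
        simp only [← mul_assoc, hrw]
    _ ≤ 2 ^ (2 * τ + N + 1) * Z := final _ _ (by nlinarith) (by nlinarith)

set_option maxHeartbeats 1000000 in
lemma aux_caseB {N γ L τ β₁ β₂ C₀ q t : ℝ}
    (hN : 0 ≤ N) (hγ : 0 ≤ γ) (hL : 0 < L) (hτ : 0 < τ) (hβ₁ : 0 < β₁) (hβ₁₂ : β₁ ≤ β₂)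
    (hC₀ : 0 ≤ C₀) (hqτ : τ + (N + 2) ≤ τ * q) (hcase : 2 * (L + 1) < β₁ * t) :
    (γ * t) ^ N * (C₀ * (β₂ * t + 2 * L) * (1 + max (β₁ * t - L) 0) ^ (-q)) ^ τ ≤
      2 ^ (2 * τ + N) * (C₀ ^ τ * ((γ / β₁) ^ N * (β₂ / β₁) ^ τ)) *
        (1 + β₁ * t - L) ^ (-(2:ℝ)) := by
  have hβ₂ : 0 < β₂ := lt_of_lt_of_le hβ₁ hβ₁₂
  have hBB : 0 < β₂ / β₁ := div_pos hβ₂ hβ₁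
  have hGG : 0 ≤ γ / β₁ := div_nonneg hγ hβ₁.le
  have ht0 : 0 < t := by nlinarith
  have hβt : 0 < β₁ * t := by nlinarith
  have hmm : max (β₁ * t - L) 0 = β₁ * t - L := max_eq_left (by nlinarith)
  have hc0 : (0:ℝ) < 1 + β₁ * t - L := by nlinarith
  have hc3 : (3:ℝ) ≤ 1 + β₁ * t - L := by nlinarith
  have hchalf : β₁ * t / 2 ≤ 1 + β₁ * t - L := by nlinarith
  set c : ℝ := 1 + β₁ * t - L with hcdef
  have hq0 : 0 < q := by nlinarith
  -- step 1: bound the base of the τ-power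
  have hlen0 : (0:ℝ) ≤ β₂ * t + 2 * L := by nlinarith
  have hz0 : (0:ℝ) ≤ (1 + max (β₁ * t - L) 0) ^ (-q) := Real.rpow_nonneg (by positivity) _
  have hbase0 : (0:ℝ) ≤ C₀ * (β₂ * t + 2 * L) * (1 + max (β₁ * t - L) 0) ^ (-q) :=
    mul_nonneg (mul_nonneg hC₀ hlen0) hz0
  have hbase : C₀ * (β₂ * t + 2 * L) * (1 + max (β₁ * t - L) 0) ^ (-q)
      ≤ C₀ * (2 * (β₂ * t)) * c ^ (-q) := by
    have h1 : 1 + max (β₁ * t - L) 0 = c := by rw [hmm, hcdef]; ring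
    rw [h1]
    have : β₂ * t + 2 * L ≤ 2 * (β₂ * t) := by nlinarith
    have hcq : (0:ℝ) ≤ c ^ (-q) := Real.rpow_nonneg hc0.le _
    have := mul_le_mul_of_nonneg_left this hC₀
    exact mul_le_mul_of_nonneg_right (by linarith) hcq
  have ha2 : (C₀ * (β₂ * t + 2 * L) * (1 + max (β₁ * t - L) 0) ^ (-q)) ^ τ ≤
      C₀ ^ τ * (2 * (β₂ * t)) ^ τ * c ^ (-q * τ) := by
    calc (C₀ * (β₂ * t + 2 * L) * (1 + max (β₁ * t - L) 0) ^ (-q)) ^ τ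
        ≤ (C₀ * (2 * (β₂ * t)) * c ^ (-q)) ^ τ := Real.rpow_le_rpow hbase0 hbase hτ.le
    _ = C₀ ^ τ * (2 * (β₂ * t)) ^ τ * c ^ (-q * τ) := by
        rw [Real.mul_rpow (by positivity) (Real.rpow_nonneg hc0.le _),
          Real.mul_rpow hC₀ (by positivity), ← Real.rpow_mul hc0.le]
  -- step 2: exponent decay
  have hdecay : c ^ (-q * τ) ≤ c ^ (-τ) * c ^ (-N) * c ^ (-(2:ℝ)) := by
    have : c ^ (-q * τ) ≤ c ^ (-τ + (-N + -(2:ℝ))) := by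
      apply Real.rpow_le_rpow_of_exponent_le (by linarith) (by nlinarith)
    rw [Real.rpow_add hc0, Real.rpow_add hc0, ← mul_assoc] at this
    exact this
  -- step 3: collapse t powers into divisions
  have hd1 : (γ * t) ^ N * c ^ (-N) = (γ * t / c) ^ N := by
    rw [Real.div_rpow (mul_nonneg hγ ht0.le) hc0.le, Real.rpow_neg hc0.le, div_eq_mul_inv]
  have hd2 : (2 * (β₂ * t)) ^ τ * c ^ (-τ) = (2 * (β₂ * t) / c) ^ τ := by
    rw [Real.div_rpow (by positivity) hc0.le, Real.rpow_neg hc0.le, div_eq_mul_inv]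
  -- step 4: bound the quotients
  have hq1 : (γ * t / c) ^ N ≤ (2 * (γ / β₁)) ^ N := by
    apply Real.rpow_le_rpow (by positivity) ?_ hN
    rw [div_le_iff₀ hc0]
    have h' := mul_le_mul_of_nonneg_left hchalf hGG
    rw [show γ / β₁ * (β₁ * t / 2) = γ * t / 2 from by field_simp] at h'
    linarith
  have hq2 : (2 * (β₂ * t) / c) ^ τ ≤ (2 * 2 * (β₂ / β₁)) ^ τ := by
    apply Real.rpow_le_rpow (by positivity) ?_ hτ.le
    rw [div_le_iff₀ hc0]
    have h' := mul_le_mul_of_nonneg_left hchalf hBB.le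
    rw [show β₂ / β₁ * (β₁ * t / 2) = β₂ * t / 2 from by field_simp] at h'
    nlinarith
  -- assemble
  have hcm2 : (0:ℝ) ≤ c ^ (-(2:ℝ)) := Real.rpow_nonneg hc0.le _
  calc (γ * t) ^ N * (C₀ * (β₂ * t + 2 * L) * (1 + max (β₁ * t - L) 0) ^ (-q)) ^ τ
      ≤ (γ * t) ^ N * (C₀ ^ τ * (2 * (β₂ * t)) ^ τ * c ^ (-q * τ)) :=
        mul_le_mul_of_nonneg_left ha2 (Real.rpow_nonneg (mul_nonneg hγ ht0.le) N)
  _ ≤ (γ * t) ^ N * (C₀ ^ τ * (2 * (β₂ * t)) ^ τ * (c ^ (-τ) * c ^ (-N) * c ^ (-(2:ℝ)))) := by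
      apply mul_le_mul_of_nonneg_left ?_ (Real.rpow_nonneg (mul_nonneg hγ ht0.le) N)
      exact mul_le_mul_of_nonneg_left hdecay (mul_nonneg (Real.rpow_nonneg hC₀ τ) (Real.rpow_nonneg (by positivity) τ))
  _ = ((γ * t) ^ N * c ^ (-N)) * ((2 * (β₂ * t)) ^ τ * c ^ (-τ)) * C₀ ^ τ * c ^ (-(2:ℝ)) := by
      ring
  _ = (γ * t / c) ^ N * (2 * (β₂ * t) / c) ^ τ * C₀ ^ τ * c ^ (-(2:ℝ)) := by
      rw [hd1, hd2]
  _ ≤ (2 * (γ / β₁)) ^ N * (2 * 2 * (β₂ / β₁)) ^ τ * C₀ ^ τ * c ^ (-(2:ℝ)) := by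
      have r1 : (0:ℝ) ≤ (γ * t / c) ^ N := Real.rpow_nonneg (by positivity) N
      have r2 : (0:ℝ) ≤ (2 * 2 * (β₂ / β₁)) ^ τ := Real.rpow_nonneg (by positivity) τ
      have := mul_le_mul hq1 hq2 (Real.rpow_nonneg (by positivity) τ) (Real.rpow_nonneg (by positivity) N)
      exact mul_le_mul_of_nonneg_right (mul_le_mul_of_nonneg_right this (Real.rpow_nonneg hC₀ τ)) hcm2
  _ = 2 ^ (2 * τ + N) * (C₀ ^ τ * ((γ / β₁) ^ N * (β₂ / β₁) ^ τ)) * c ^ (-(2:ℝ)) := by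
      rw [Real.mul_rpow (by norm_num) hGG, Real.mul_rpow (by norm_num) hBB.le,
        Real.mul_rpow (by norm_num) (by norm_num : (0:ℝ) ≤ 2)]
      rw [show (2:ℝ) ^ N * (γ / β₁) ^ N * (2 ^ τ * 2 ^ τ * (β₂ / β₁) ^ τ) * C₀ ^ τ * c ^ (-(2:ℝ))
          = ((2:ℝ) ^ τ * 2 ^ τ) * 2 ^ N * ((γ / β₁) ^ N * (β₂ / β₁) ^ τ * C₀ ^ τ * c ^ (-(2:ℝ))) from by ring,
        ← Real.rpow_add two_pos τ τ, ← Real.rpow_add two_pos (τ + τ) N,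
        show τ + τ + N = 2 * τ + N from by ring]
      ring
  _ = 2 ^ (2 * τ + N) * (C₀ ^ τ * ((γ / β₁) ^ N * (β₂ / β₁) ^ τ)) * (1 + β₁ * t - L) ^ (-(2:ℝ)) := by
      rw [hcdef]

lemma aux_tele (d : ℕ → ℝ) (hanti : ∀ n, d (n + 1) ≤ d n) (h0 : ∀ n, 0 ≤ d n) :
    ∑' n, ENNReal.ofReal (d n - d (n + 1)) ≤ ENNReal.ofReal (d 0) := by
  rw [ENNReal.tsum_eq_iSup_sum]
  apply iSup_le
  intro s
  classical
  have hsub : s ⊆ Finset.range (s.sup id + 1) := by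
    intro i hi
    simp only [Finset.mem_range]
    exact Nat.lt_succ_of_le (Finset.le_sup (f := id) hi)
  calc ∑ i ∈ s, ENNReal.ofReal (d i - d (i + 1))
      ≤ ∑ i ∈ Finset.range (s.sup id + 1), ENNReal.ofReal (d i - d (i + 1)) :=
        Finset.sum_le_sum_of_subset hsub
  _ = ENNReal.ofReal (∑ i ∈ Finset.range (s.sup id + 1), (d i - d (i + 1))) := by
        rw [ENNReal.ofReal_sum_of_nonneg]
        intro i _
        linarith [hanti i]
  _ = ENNReal.ofReal (d 0 - d (s.sup id + 1)) := by rw [Finset.sum_range_sub']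
  _ ≤ ENNReal.ofReal (d 0) := ENNReal.ofReal_le_ofReal (by linarith [h0 (s.sup id + 1)])

lemma aux_core {A B D W S T K p pE : ℝ}
    (hA : 0 ≤ A) (hB : 0 ≤ B) (hD : 0 ≤ D) (hW : 1 ≤ W) (hS : 1 ≤ S)
    (hT0 : 0 ≤ T) (hT : T ≤ 2 * S) (hK0 : 0 ≤ K) (hK : K ≤ S)
    (hp : 0 ≤ p) (hpE : 8 * p ≤ pE) :
    T * ((2 * p) * (D * (A * (B * W)))) + (p * (D * (A * B))) * K
      ≤ pE * (B * (A * (D * (W * S)))) := by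
  have hW0 : 0 ≤ W := by linarith
  have hS0 : 0 ≤ S := by linarith
  have hDAB : 0 ≤ D * (A * B) := mul_nonneg hD (mul_nonneg hA hB)
  have hDABW : 0 ≤ D * (A * (B * W)) := mul_nonneg hD (mul_nonneg hA (mul_nonneg hB hW0))
  have h1 : T * ((2 * p) * (D * (A * (B * W)))) ≤ (2 * S) * ((2 * p) * (D * (A * (B * W)))) :=
    mul_le_mul_of_nonneg_right hT (by positivity)
  have h2 : (p * (D * (A * B))) * K ≤ (p * (D * (A * B))) * S :=
    mul_le_mul_of_nonneg_left hK (by positivity)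
  have h3 : (p * (D * (A * B))) * S ≤ (p * (D * (A * B))) * S * W := by
    nlinarith [mul_nonneg (mul_nonneg (mul_nonneg hp hDAB) hS0) (sub_nonneg.2 hW)]
  have h4 : (2 * S) * ((2 * p) * (D * (A * (B * W)))) + (p * (D * (A * B))) * S * W
      ≤ 8 * p * (B * (A * (D * (W * S)))) := by nlinarith [mul_nonneg (mul_nonneg hDAB hW0) (mul_nonneg hp hS0)]
  have h5 : 8 * p * (B * (A * (D * (W * S)))) ≤ pE * (B * (A * (D * (W * S)))) :=
    mul_le_mul_of_nonneg_right hpE (by positivity)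
  linarith

lemma aux_final_scalar {N γ L τ β₁ β₂ C₀ q : ℝ}
    (hN : 0 ≤ N) (hγ : 0 ≤ γ) (hL : 0 < L) (hτ : 0 < τ) (hβ₁ : 0 < β₁) (hβ₁₂ : β₁ ≤ β₂)
    (hC₀ : 0 ≤ C₀) (hqτ : τ + (N + 2) ≤ τ * q) :
    (2 * (L + 1) / β₁ + 1) * (2 ^ (2 * τ + N + 1) * (C₀ ^ τ * ((γ / β₁) ^ N * ((β₂ / β₁) ^ τ * (1 + L ^ (τ + N))))))
      + (2 ^ (2 * τ + N) * (C₀ ^ τ * ((γ / β₁) ^ N * (β₂ / β₁) ^ τ)) * (1 / β₁ + 1 / 3)) * (1 / 3)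
      ≤ 2 ^ (4 + N + τ + τ * q) * (β₂ / β₁) ^ τ * (γ / β₁) ^ N * C₀ ^ τ *
          (1 + L ^ (τ + N)) * (1 + (L + 1) / β₁) := by
  have hβ₂ : 0 < β₂ := lt_of_lt_of_le hβ₁ hβ₁₂
  have hGG : 0 ≤ γ / β₁ := div_nonneg hγ hβ₁.le
  have hA0 : (0:ℝ) ≤ (γ / β₁) ^ N := Real.rpow_nonneg hGG N
  have hD0 : (0:ℝ) ≤ C₀ ^ τ := Real.rpow_nonneg hC₀ τ
  have hB0 : (0:ℝ) ≤ (β₂ / β₁) ^ τ := Real.rpow_nonneg (by positivity) τ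
  have hW1 : (1:ℝ) ≤ 1 + L ^ (τ + N) := by nlinarith [Real.rpow_nonneg hL.le (τ + N)]
  have hLβ : (0:ℝ) ≤ (L + 1) / β₁ := by positivity
  have hS1 : (1:ℝ) ≤ 1 + (L + 1) / β₁ := by linarith
  have hT0 : (0:ℝ) ≤ 2 * (L + 1) / β₁ + 1 := by positivity
  have hT : 2 * (L + 1) / β₁ + 1 ≤ 2 * (1 + (L + 1) / β₁) := by
    rw [mul_div_assoc]; linarith
  have hK0 : (0:ℝ) ≤ (1 / β₁ + 1 / 3) * (1 / 3) := by positivity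
  have hK : (1 / β₁ + 1 / 3) * (1 / 3) ≤ 1 + (L + 1) / β₁ := by
    have h1 : 1 / β₁ * (1 / 3) ≤ 1 / β₁ * (L + 1) := by
      apply mul_le_mul_of_nonneg_left (by linarith) (by positivity)
    have h2 : 1 / β₁ * (L + 1) = (L + 1) / β₁ := by ring
    nlinarith
  have hp : (0:ℝ) ≤ (2:ℝ) ^ (2 * τ + N) := Real.rpow_nonneg (by norm_num) _
  have h2p : (2:ℝ) ^ (2 * τ + N + 1) = 2 * 2 ^ (2 * τ + N) := by
    rw [show 2 * τ + N + 1 = (2 * τ + N) + 1 by ring, Real.rpow_add two_pos, Real.rpow_one]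
    ring
  have hpE : 8 * (2:ℝ) ^ (2 * τ + N) ≤ 2 ^ (4 + N + τ + τ * q) := by
    have e3 : (2:ℝ) ^ (2 * τ + N + 3) = 2 ^ (2 * τ + N) * 8 := by
      rw [show 2 * τ + N + 3 = (2 * τ + N) + 3 by ring, Real.rpow_add two_pos,
        show (3:ℝ) = ((3:ℕ):ℝ) by norm_num, Real.rpow_natCast]
      norm_num
    have : (2:ℝ) ^ (2 * τ + N + 3) ≤ 2 ^ (4 + N + τ + τ * q) :=
      Real.rpow_le_rpow_of_exponent_le one_le_two (by nlinarith)
    linarith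
  have core := aux_core (A := (γ / β₁) ^ N) (B := (β₂ / β₁) ^ τ) (D := C₀ ^ τ)
    (W := 1 + L ^ (τ + N)) (S := 1 + (L + 1) / β₁) (T := 2 * (L + 1) / β₁ + 1)
    (K := (1 / β₁ + 1 / 3) * (1 / 3)) (p := 2 ^ (2 * τ + N)) (pE := 2 ^ (4 + N + τ + τ * q))
    hA0 hB0 hD0 hW1 hS1 hT0 hT hK0 hK hp hpE
  calc (2 * (L + 1) / β₁ + 1) * (2 ^ (2 * τ + N + 1) * (C₀ ^ τ * ((γ / β₁) ^ N * ((β₂ / β₁) ^ τ * (1 + L ^ (τ + N))))))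
      + (2 ^ (2 * τ + N) * (C₀ ^ τ * ((γ / β₁) ^ N * (β₂ / β₁) ^ τ)) * (1 / β₁ + 1 / 3)) * (1 / 3)
      = (2 * (L + 1) / β₁ + 1) * ((2 * 2 ^ (2 * τ + N)) * (C₀ ^ τ * ((γ / β₁) ^ N * ((β₂ / β₁) ^ τ * (1 + L ^ (τ + N))))))
        + ((2 ^ (2 * τ + N) * (C₀ ^ τ * ((γ / β₁) ^ N * (β₂ / β₁) ^ τ))) * ((1 / β₁ + 1 / 3) * (1 / 3))) := by
        rw [h2p]; ring
  _ ≤ 2 ^ (4 + N + τ + τ * q) * ((β₂ / β₁) ^ τ * ((γ / β₁) ^ N * (C₀ ^ τ * ((1 + L ^ (τ + N)) * (1 + (L + 1) / β₁))))) := by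
        have : (2 ^ (2 * τ + N) * (C₀ ^ τ * ((γ / β₁) ^ N * (β₂ / β₁) ^ τ))) * ((1 / β₁ + 1 / 3) * (1 / 3))
            = (2 ^ (2 * τ + N) * (C₀ ^ τ * ((γ / β₁) ^ N * (β₂ / β₁) ^ τ))) * ((1 / β₁ + 1 / 3) * (1 / 3)) := rfl
        calc _ = (2 * (L + 1) / β₁ + 1) * ((2 * 2 ^ (2 * τ + N)) * (C₀ ^ τ * ((γ / β₁) ^ N * ((β₂ / β₁) ^ τ * (1 + L ^ (τ + N))))))
            + ((2 ^ (2 * τ + N) * (C₀ ^ τ * ((γ / β₁) ^ N * (β₂ / β₁) ^ τ))) * ((1 / β₁ + 1 / 3) * (1 / 3))) := rfl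
        _ ≤ _ := by
            have h := core
            calc (2 * (L + 1) / β₁ + 1) * ((2 * 2 ^ (2 * τ + N)) * (C₀ ^ τ * ((γ / β₁) ^ N * ((β₂ / β₁) ^ τ * (1 + L ^ (τ + N))))))
                + ((2 ^ (2 * τ + N) * (C₀ ^ τ * ((γ / β₁) ^ N * (β₂ / β₁) ^ τ))) * ((1 / β₁ + 1 / 3) * (1 / 3)))
                = (2 * (L + 1) / β₁ + 1) * ((2 * 2 ^ (2 * τ + N)) * (C₀ ^ τ * ((γ / β₁) ^ N * ((β₂ / β₁) ^ τ * (1 + L ^ (τ + N))))))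
                  + ((2 ^ (2 * τ + N) * (C₀ ^ τ * ((γ / β₁) ^ N * (β₂ / β₁) ^ τ))) * ((1 / β₁ + 1 / 3) * (1 / 3))) := rfl
            _ ≤ 2 ^ (4 + N + τ + τ * q) * ((β₂ / β₁) ^ τ * ((γ / β₁) ^ N * (C₀ ^ τ * ((1 + L ^ (τ + N)) * (1 + (L + 1) / β₁))))) := by
                have := core
                linarith [core]
  _ = 2 ^ (4 + N + τ + τ * q) * (β₂ / β₁) ^ τ * (γ / β₁) ^ N * C₀ ^ τ *
        (1 + L ^ (τ + N)) * (1 + (L + 1) / β₁) := by ring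

set_option maxHeartbeats 1000000 in
/-- Let `N, γ ∈ [0,∞)`, `L, τ ∈ (0,∞)`, `M ∈ ℝ`, `0 < β₁ ≤ β₂`, and let
`f : ℝ → ℂ` be measurable with `|f(x)| ≤ C₀·(1+|x|)^{−q}` for all `x`, where `C₀ ≥ 0` and
`q ≥ 1 + (N+2)/τ`. Then, with `C = 2^{4+N+τ+τq}`,
`∑_{k∈ℤ, k+M≥0} |γ(k+M)|^N (∫_{β₁(k+M)−L}^{β₂(k+M)+L} |f(x)| dx)^τ
  ≤ C·(β₂/β₁)^τ·(γ/β₁)^N·C₀^τ·(1 + L^{τ+N})·(1 + (L+1)/β₁)`. -/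
theorem main_summation_lemma (N γ : ℝ) (hN : 0 ≤ N) (hγ : 0 ≤ γ)
    (L τ : ℝ) (hL : 0 < L) (hτ : 0 < τ) (M : ℝ)
    (β₁ β₂ : ℝ) (hβ₁ : 0 < β₁) (hβ₁₂ : β₁ ≤ β₂)
    (f : ℝ → ℂ) (hf : Measurable f) (C₀ q : ℝ) (hC₀ : 0 ≤ C₀)
    (hq : 1 + (N + 2) / τ ≤ q) (hbound : ∀ x : ℝ, ‖f x‖ ≤ C₀ * (1 + |x|) ^ (-q)) :
    (∑' k : {k : ℤ // 0 ≤ (k:ℝ) + M},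
        ENNReal.ofReal (|γ * ((k.1:ℝ) + M)| ^ N *
          (∫ x in Set.Icc (β₁ * ((k.1:ℝ) + M) - L) (β₂ * ((k.1:ℝ) + M) + L), ‖f x‖) ^ τ))
      ≤ ENNReal.ofReal ((2:ℝ) ^ (4 + N + τ + τ * q) * (β₂ / β₁) ^ τ * (γ / β₁) ^ N *
          C₀ ^ τ * (1 + L ^ (τ + N)) * (1 + (L + 1) / β₁)) := by
  classical
  have hqτ : τ + (N + 2) ≤ τ * q := by
    have h := mul_le_mul_of_nonneg_left hq hτ.le
    have e : τ * (1 + (N + 2) / τ) = τ + (N + 2) := by field_simp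
    linarith [e ▸ h]
  have hq0 : 0 < q := by nlinarith
  set k₀ : ℤ := ⌈-M⌉ with hk0
  have hδ0 : 0 ≤ (k₀:ℝ) + M := by
    have := Int.le_ceil (-M)
    rw [← hk0] at this
    linarith
  set δ : ℝ := (k₀:ℝ) + M with hδdef
  have hmem : ∀ n : ℕ, 0 ≤ ((k₀ + (n:ℤ) : ℤ):ℝ) + M := by
    intro n
    push_cast
    have : (0:ℝ) ≤ (n:ℝ) := n.cast_nonneg
    linarith
  let e : ℕ ≃ {k : ℤ // 0 ≤ (k:ℝ) + M} :=
    { toFun := fun n => ⟨k₀ + n, hmem n⟩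
      invFun := fun s => (s.1 - k₀).toNat
      left_inv := fun n => by simp
      right_inv := fun s => by
        have hk : k₀ ≤ s.1 := by
          rw [hk0]
          apply Int.ceil_le.mpr
          have := s.2
          push_cast
          linarith
        apply Subtype.ext
        simp [Int.toNat_of_nonneg (sub_nonneg.mpr hk)] }
  rw [← Equiv.tsum_eq e]
  have hcast : ∀ n : ℕ, (((k₀ + (n:ℤ) : ℤ):ℝ) + M) = δ + n := by
    intro n; push_cast; rw [hδdef]; ring
  -- abbreviations
  set P : ℝ := 2 ^ (2 * τ + N + 1) * (C₀ ^ τ * ((γ / β₁) ^ N * ((β₂ / β₁) ^ τ * (1 + L ^ (τ + N))))) with hPdef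
  set Qc : ℝ := 2 ^ (2 * τ + N) * (C₀ ^ τ * ((γ / β₁) ^ N * (β₂ / β₁) ^ τ)) with hQdef
  have hGG : 0 ≤ γ / β₁ := div_nonneg hγ hβ₁.le
  have hP0 : 0 ≤ P := by
    rw [hPdef]
    have := Real.rpow_nonneg hL.le (τ + N)
    apply mul_nonneg (Real.rpow_nonneg (by norm_num) _)
    apply mul_nonneg (Real.rpow_nonneg hC₀ _)
    apply mul_nonneg (Real.rpow_nonneg hGG _)
    apply mul_nonneg (Real.rpow_nonneg (div_nonneg (hβ₁.trans_le hβ₁₂).le hβ₁.le) _)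
    linarith
  have hQ0 : 0 ≤ Qc := by
    rw [hQdef]
    apply mul_nonneg (Real.rpow_nonneg (by norm_num) _)
    apply mul_nonneg (Real.rpow_nonneg hC₀ _)
    exact mul_nonneg (Real.rpow_nonneg hGG _) (Real.rpow_nonneg (div_nonneg (hβ₁.trans_le hβ₁₂).le hβ₁.le) _)
  set d : ℕ → ℝ := fun n => (max 3 (1 + β₁ * (δ + n) - L))⁻¹ with hddef
  have hd_anti : ∀ n : ℕ, d (n + 1) ≤ d n := by
    intro n
    rw [hddef]
    have hc : (0:ℝ) < max 3 (1 + β₁ * (δ + n) - L) := lt_max_of_lt_left (by norm_num)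
    apply inv_anti₀ hc
    apply max_le_max le_rfl
    have : (((n:ℕ) + 1 : ℕ):ℝ) = (n:ℝ) + 1 := by push_cast; ring
    rw [this]
    nlinarith
  have hd_nonneg : ∀ n : ℕ, 0 ≤ d n := by
    intro n
    rw [hddef]
    apply inv_nonneg.mpr
    exact le_trans (by norm_num) (le_max_left _ _)
  have hd0 : d 0 ≤ 1 / 3 := by
    rw [hddef]
    simp only []
    rw [one_div]
    apply inv_anti₀ (by norm_num)
    exact le_max_left _ _
  set gA : ℕ → ℝ≥0∞ := fun n => if β₁ * (δ + n) ≤ 2 * (L + 1) then ENNReal.ofReal P else 0 with hgA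
  set gB : ℕ → ℝ≥0∞ := fun n => ENNReal.ofReal ((Qc * (1 / β₁ + 1 / 3)) * (d n - d (n + 1))) with hgB
  -- pointwise bound
  have hpt : ∀ n : ℕ,
      ENNReal.ofReal (|γ * (((k₀ + (n:ℤ) : ℤ):ℝ) + M)| ^ N *
        (∫ x in Set.Icc (β₁ * (((k₀ + (n:ℤ) : ℤ):ℝ) + M) - L) (β₂ * (((k₀ + (n:ℤ) : ℤ):ℝ) + M) + L), ‖f x‖) ^ τ)
      ≤ gA n + gB n := by
    intro n
    rw [hcast n]
    have ht0 : (0:ℝ) ≤ δ + n := by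
      have : (0:ℝ) ≤ (n:ℝ) := n.cast_nonneg
      linarith
    have habs : |γ * (δ + (n:ℝ))| = γ * (δ + (n:ℝ)) := abs_of_nonneg (mul_nonneg hγ ht0)
    have hI0 : 0 ≤ ∫ x in Set.Icc (β₁ * (δ + (n:ℝ)) - L) (β₂ * (δ + (n:ℝ)) + L), ‖f x‖ :=
      integral_nonneg fun x => norm_nonneg _
    have hIb : (∫ x in Set.Icc (β₁ * (δ + (n:ℝ)) - L) (β₂ * (δ + (n:ℝ)) + L), ‖f x‖) ≤
        C₀ * (β₂ * (δ + (n:ℝ)) + 2 * L) * (1 + max (β₁ * (δ + (n:ℝ)) - L) 0) ^ (-q) := by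
      refine (aux_int_bound f C₀ q hC₀ hq0.le hbound (β₁ * (δ + (n:ℝ)) - L) (β₂ * (δ + (n:ℝ)) + L)).trans ?_
      have hz : (0:ℝ) ≤ (1 + max (β₁ * (δ + (n:ℝ)) - L) 0) ^ (-q) :=
        Real.rpow_nonneg (by positivity) _
      have hb2 : β₁ * (δ + (n:ℝ)) ≤ β₂ * (δ + (n:ℝ)) := mul_le_mul_of_nonneg_right hβ₁₂ ht0
      have hb1 : 0 ≤ β₁ * (δ + (n:ℝ)) := mul_nonneg hβ₁.le ht0
      have hmax : max (β₂ * (δ + (n:ℝ)) + L - (β₁ * (δ + (n:ℝ)) - L)) 0 ≤ β₂ * (δ + (n:ℝ)) + 2 * L := by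
        apply max_le (by linarith) (by linarith)
      calc C₀ * (1 + max (β₁ * (δ + (n:ℝ)) - L) 0) ^ (-q) * max (β₂ * (δ + (n:ℝ)) + L - (β₁ * (δ + (n:ℝ)) - L)) 0
          ≤ C₀ * (1 + max (β₁ * (δ + (n:ℝ)) - L) 0) ^ (-q) * (β₂ * (δ + (n:ℝ)) + 2 * L) :=
            mul_le_mul_of_nonneg_left hmax (mul_nonneg hC₀ hz)
      _ = C₀ * (β₂ * (δ + (n:ℝ)) + 2 * L) * (1 + max (β₁ * (δ + (n:ℝ)) - L) 0) ^ (-q) := by ring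
    have hterm : |γ * (δ + (n:ℝ))| ^ N * (∫ x in Set.Icc (β₁ * (δ + (n:ℝ)) - L) (β₂ * (δ + (n:ℝ)) + L), ‖f x‖) ^ τ ≤
        (γ * (δ + (n:ℝ))) ^ N * (C₀ * (β₂ * (δ + (n:ℝ)) + 2 * L) * (1 + max (β₁ * (δ + (n:ℝ)) - L) 0) ^ (-q)) ^ τ := by
      rw [habs]
      exact mul_le_mul_of_nonneg_left (Real.rpow_le_rpow hI0 hIb hτ.le)
        (Real.rpow_nonneg (mul_nonneg hγ ht0) N)
    rcases le_or_gt (β₁ * (δ + (n:ℝ))) (2 * (L + 1)) with hcase | hcase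
    · have hE := aux_caseA hN hγ hL hτ hβ₁ hβ₁₂ hC₀ hqτ ht0 hcase
      rw [← hPdef] at hE
      have hgAn : gA n = ENNReal.ofReal P := by
        simp only [hgA]
        rw [if_pos hcase]
      refine le_trans ?_ le_self_add
      rw [hgAn]
      exact ENNReal.ofReal_le_ofReal (le_trans hterm hE)
    · have hE := aux_caseB hN hγ hL hτ hβ₁ hβ₁₂ hC₀ hqτ hcase
      rw [← hQdef] at hE
      have hc3 : (3:ℝ) ≤ 1 + β₁ * (δ + (n:ℝ)) - L := by nlinarith
      have hc0 : (0:ℝ) < 1 + β₁ * (δ + (n:ℝ)) - L := by linarith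
      have hdn : d n = (1 + β₁ * (δ + (n:ℝ)) - L)⁻¹ := by
        rw [hddef]
        simp only []
        rw [max_eq_right hc3]
      have hdn1 : d (n + 1) = (1 + β₁ * (δ + (n:ℝ)) - L + β₁)⁻¹ := by
        rw [hddef]
        simp only []
        push_cast
        rw [max_eq_right (by nlinarith)]
        rw [show 1 + β₁ * (δ + ((n:ℝ) + 1)) - L = 1 + β₁ * (δ + (n:ℝ)) - L + β₁ from by ring]
      have hkey : (1 + β₁ * (δ + (n:ℝ)) - L) ^ (-(2:ℝ)) ≤ (1 / β₁ + 1 / 3) * (d n - d (n + 1)) := by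
        rw [hdn, hdn1]
        have hcc : (1 + β₁ * (δ + (n:ℝ)) - L) ^ (-(2:ℝ))
            = ((1 + β₁ * (δ + (n:ℝ)) - L) * (1 + β₁ * (δ + (n:ℝ)) - L))⁻¹ := by
          rw [show -(2:ℝ) = -((2:ℕ):ℝ) by norm_num, Real.rpow_neg hc0.le, Real.rpow_natCast]
          norm_num [sq]
        rw [hcc]
        have hcb0 : (0:ℝ) < 1 + β₁ * (δ + (n:ℝ)) - L + β₁ := by linarith
        have hsub : (1 + β₁ * (δ + (n:ℝ)) - L)⁻¹ - (1 + β₁ * (δ + (n:ℝ)) - L + β₁)⁻¹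
            = β₁ / ((1 + β₁ * (δ + (n:ℝ)) - L) * (1 + β₁ * (δ + (n:ℝ)) - L + β₁)) := by
          rw [inv_eq_one_div, inv_eq_one_div, div_sub_div _ _ (ne_of_gt hc0) (ne_of_gt hcb0)]
          congr 1
          ring
        rw [hsub]
        have h1 : (1 / β₁ + 1 / 3) * (β₁ / ((1 + β₁ * (δ + (n:ℝ)) - L) * (1 + β₁ * (δ + (n:ℝ)) - L + β₁)))
            = (1 + β₁ / 3) / ((1 + β₁ * (δ + (n:ℝ)) - L) * (1 + β₁ * (δ + (n:ℝ)) - L + β₁)) := by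
          have e0 : (1 + β₁ * (δ + (n:ℝ)) - L) ≠ 0 := ne_of_gt hc0
          have e1 : (1 + β₁ * (δ + (n:ℝ)) - L + β₁) ≠ 0 := ne_of_gt hcb0
          field_simp
        rw [h1, inv_eq_one_div, div_le_div_iff₀ (mul_pos hc0 hc0) (mul_pos hc0 hcb0)]
        have hfin : ∀ c : ℝ, 3 ≤ c → 1 * (c * (c + β₁)) ≤ (1 + β₁ / 3) * (c * c) := by
          intro c hc
          nlinarith [mul_nonneg (mul_nonneg (sub_nonneg.2 hc) (by linarith : (0:ℝ) ≤ c)) hβ₁.le]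
        exact hfin _ hc3
      have h2 : |γ * (δ + (n:ℝ))| ^ N * (∫ x in Set.Icc (β₁ * (δ + (n:ℝ)) - L) (β₂ * (δ + (n:ℝ)) + L), ‖f x‖) ^ τ ≤
          (Qc * (1 / β₁ + 1 / 3)) * (d n - d (n + 1)) := by
        refine le_trans hterm (le_trans hE ?_)
        calc Qc * (1 + β₁ * (δ + (n:ℝ)) - L) ^ (-(2:ℝ))
            ≤ Qc * ((1 / β₁ + 1 / 3) * (d n - d (n + 1))) :=
              mul_le_mul_of_nonneg_left hkey hQ0
        _ = (Qc * (1 / β₁ + 1 / 3)) * (d n - d (n + 1)) := by ring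
      refine le_trans ?_ le_add_self
      simp only [hgB]
      exact ENNReal.ofReal_le_ofReal h2
  refine le_trans (ENNReal.tsum_le_tsum hpt) ?_
  rw [ENNReal.tsum_add]
  -- sum of gA
  have hA : ∑' n, gA n ≤ ENNReal.ofReal ((2 * (L + 1) / β₁ + 1) * P) := by
    have hT0 : (0:ℝ) ≤ 2 * (L + 1) / β₁ := by positivity
    have hsupp : ∀ n : ℕ, n ∉ Finset.range (⌊2 * (L + 1) / β₁⌋₊ + 1) → gA n = 0 := by
      intro n hn
      simp only [Finset.mem_range, not_lt] at hn
      simp only [hgA]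
      rw [if_neg]
      intro hcon
      have h1 : (n:ℝ) ≤ 2 * (L + 1) / β₁ := by
        rw [le_div_iff₀ hβ₁]
        have : (0:ℝ) ≤ (n:ℝ) := n.cast_nonneg
        nlinarith
      have h2 : n ≤ ⌊2 * (L + 1) / β₁⌋₊ := Nat.le_floor h1
      omega
    rw [tsum_eq_sum hsupp]
    have hle : ∀ i ∈ Finset.range (⌊2 * (L + 1) / β₁⌋₊ + 1), gA i ≤ ENNReal.ofReal P := by
      intro i _
      simp only [hgA]
      split_ifs
      · exact le_rfl
      · exact zero_le
    calc ∑ n ∈ Finset.range (⌊2 * (L + 1) / β₁⌋₊ + 1), gA n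
        ≤ ∑ _n ∈ Finset.range (⌊2 * (L + 1) / β₁⌋₊ + 1), ENNReal.ofReal P := Finset.sum_le_sum hle
    _ = ((⌊2 * (L + 1) / β₁⌋₊ + 1 : ℕ) : ℝ≥0∞) * ENNReal.ofReal P := by
        rw [Finset.sum_const, Finset.card_range, nsmul_eq_mul]
    _ ≤ ENNReal.ofReal (2 * (L + 1) / β₁ + 1) * ENNReal.ofReal P := by
        apply mul_le_mul_left
        rw [← ENNReal.ofReal_natCast]
        apply ENNReal.ofReal_le_ofReal
        push_cast
        linarith [Nat.floor_le hT0]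
    _ = ENNReal.ofReal ((2 * (L + 1) / β₁ + 1) * P) := (ENNReal.ofReal_mul (by linarith)).symm
  -- sum of gB
  have hB : ∑' n, gB n ≤ ENNReal.ofReal ((Qc * (1 / β₁ + 1 / 3)) * (1 / 3)) := by
    have hK0 : 0 ≤ Qc * (1 / β₁ + 1 / 3) := mul_nonneg hQ0 (by positivity)
    calc ∑' n, gB n
        = ∑' n, ENNReal.ofReal (Qc * (1 / β₁ + 1 / 3)) * ENNReal.ofReal (d n - d (n + 1)) := by
          apply tsum_congr
          intro n
          simp only [hgB]
          rw [← ENNReal.ofReal_mul hK0]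
    _ = ENNReal.ofReal (Qc * (1 / β₁ + 1 / 3)) * ∑' n, ENNReal.ofReal (d n - d (n + 1)) :=
          ENNReal.tsum_mul_left
    _ ≤ ENNReal.ofReal (Qc * (1 / β₁ + 1 / 3)) * ENNReal.ofReal (d 0) :=
          mul_le_mul_right (aux_tele d hd_anti hd_nonneg) _
    _ ≤ ENNReal.ofReal (Qc * (1 / β₁ + 1 / 3)) * ENNReal.ofReal (1 / 3) :=
          mul_le_mul_right (ENNReal.ofReal_le_ofReal hd0) _
    _ = ENNReal.ofReal ((Qc * (1 / β₁ + 1 / 3)) * (1 / 3)) := (ENNReal.ofReal_mul hK0).symm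
  refine le_trans (add_le_add hA hB) ?_
  rw [← ENNReal.ofReal_add (mul_nonneg (by positivity) hP0)
    (mul_nonneg (mul_nonneg hQ0 (by positivity)) (by norm_num))]
  apply ENNReal.ofReal_le_ofReal
  have := aux_final_scalar hN hγ hL hτ hβ₁ hβ₁₂ hC₀ hqτ
  calc (2 * (L + 1) / β₁ + 1) * P + Qc * (1 / β₁ + 1 / 3) * (1 / 3)
      = (2 * (L + 1) / β₁ + 1) * (2 ^ (2 * τ + N + 1) * (C₀ ^ τ * ((γ / β₁) ^ N * ((β₂ / β₁) ^ τ * (1 + L ^ (τ + N))))))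
        + (2 ^ (2 * τ + N) * (C₀ ^ τ * ((γ / β₁) ^ N * (β₂ / β₁) ^ τ)) * (1 / β₁ + 1 / 3)) * (1 / 3) := by
        rw [hPdef, hQdef]
  _ ≤ _ := this
end
end
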